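/- Let L be a lattice in ℝ⁶ all of whose nonzero vectors have squared length at least 6, let w ∈ ℝ with 0 < w < 0.24163, and set ξ = π − 2πw − 2/7. Then ∑_{x ∈ L, ‖x‖² ≥ 22} e^{−ξ‖x‖²} < 2.19277·10⁻⁹. -/

import Mathlib

open MeasureTheory Real Metric Finset Function
open scoped RealInnerProductSpace

noncomputable section Aux18

namespace Aux18

abbrev E6 : Type := EuclideanSpace ℝ (Fin 6)
abbrev E5 : Type := EuclideanSpace ℝ (Fin 5)

def e₀ : E6 := EuclideanSpace.single (0 : Fin 6) (1 : ℝ)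

lemma norm_e₀ : ‖e₀‖ = 1 := by
  rw [e₀, EuclideanSpace.norm_single]; norm_num

lemma exists_rot (p : E6) : ∃ f : E6 ≃ₗᵢ[ℝ] E6, f p = ‖p‖ • e₀ := by
  have h : ‖p‖ = ‖‖p‖ • e₀‖ := by
    rw [norm_smul, norm_e₀, mul_one, norm_norm]
  exact ⟨Submodule.reflection (ℝ ∙ (p - ‖p‖ • e₀))ᗮ, Submodule.reflection_sub h⟩

def rot (p : E6) : E6 ≃ₗᵢ[ℝ] E6 := (exists_rot p).choose

lemma rot_apply_self (p : E6) : rot p p = ‖p‖ • e₀ := (exists_rot p).choose_spec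

/-- the model cylinder set in coordinates, centered at first coordinate `R` -/
def D (R : ℝ) : Set E6 :=
  {w : E6 | |w 0 - R| ≤ 0.285 ∧ ‖w‖ ^ 2 - (w 0) ^ 2 ≤ 1.1869 ^ 2}

def Cyl (p : E6) : Set E6 := (rot p) ⁻¹' (D ‖p‖)

lemma norm_sub_e₀_sq (u : E6) (R : ℝ) :
    ‖u - R • e₀‖ ^ 2 = (‖u‖ ^ 2 - (u 0) ^ 2) + (u 0 - R) ^ 2 := by
  have h₁ : (inner ℝ u (R • e₀) : ℝ) = R * u 0 := by
    rw [real_inner_smul_right, e₀, EuclideanSpace.inner_single_right]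
    simp
  have h₂ : ‖R • e₀‖ ^ 2 = R ^ 2 := by
    rw [norm_smul, norm_e₀, mul_one, Real.norm_eq_abs, sq_abs]
  rw [norm_sub_sq_real, h₁, h₂]; ring

lemma cyl_props {p : E6} (hp : (22:ℝ) ≤ ‖p‖ ^ 2) {y : E6} (hy : y ∈ Cyl p) :
    ‖y - p‖ ^ 2 ≤ 1.48995661 ∧
    ‖y‖ ^ 2 ≤ ‖p‖ ^ 2 + 2 * ‖p‖ * 0.285 + 1.48995661 ∧
    (19.407686 : ℝ) ≤ ‖y‖ ^ 2 := by
  obtain ⟨h1, h2⟩ := hy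
  set u : E6 := rot p y with hu
  set R := ‖p‖ with hRdef
  have hR : (4.6904157 : ℝ) ≤ R := by nlinarith [norm_nonneg p]
  have hyu : ‖y‖ = ‖u‖ := ((rot p).norm_map y).symm
  have hyp : ‖y - p‖ = ‖u - R • e₀‖ := by
    rw [← (rot p).norm_map (y - p), map_sub, rot_apply_self]
  have habs : |u 0 - R| ≤ 0.285 := h1
  have hrad : ‖u‖ ^ 2 - (u 0) ^ 2 ≤ 1.1869 ^ 2 := h2
  have hrad0 : (0:ℝ) ≤ ‖u‖ ^ 2 - (u 0) ^ 2 := by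
    have := norm_sub_e₀_sq u (u 0)
    nlinarith [sq_nonneg ‖u - (u 0) • e₀‖]
  have habs' : R - 0.285 ≤ u 0 ∧ u 0 ≤ R + 0.285 := abs_le.mp habs |>.imp (by intro h; linarith) (by intro h; linarith)
  refine ⟨?_, ?_, ?_⟩
  · rw [hyp, norm_sub_e₀_sq]
    have := abs_le.mp habs
    nlinarith [sq_abs (u 0 - R)]
  · rw [hyu]
    have h3 : ‖u‖ ^ 2 = (‖u‖ ^ 2 - (u 0) ^ 2) + (u 0) ^ 2 := by ring
    have h4 : (u 0) ^ 2 ≤ (R + 0.285) ^ 2 := by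
      have h5 : (0:ℝ) < R - 0.285 := by linarith
      nlinarith [habs'.1, habs'.2]
    nlinarith
  · rw [hyu]
    have h5 : R - 0.285 ≤ u 0 := habs'.1
    have h6 : (0:ℝ) < R - 0.285 := by linarith
    nlinarith [sq_nonneg (u 0)]


lemma norm_sq_eq6 (x : E6) : ‖x‖ ^ 2 = ∑ i, (x i) ^ 2 := by
  rw [EuclideanSpace.norm_eq, Real.sq_sqrt (by positivity)]
  simp [sq_abs]

lemma norm_sq_eq5 (x : E5) : ‖x‖ ^ 2 = ∑ i, (x i) ^ 2 := by
  rw [EuclideanSpace.norm_eq, Real.sq_sqrt (by positivity)]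
  simp [sq_abs]

def Spi (R : ℝ) : Set (Fin 6 → ℝ) :=
  {w | |w 0 - R| ≤ 0.285 ∧ (∑ i, (w i) ^ 2) - (w 0) ^ 2 ≤ 1.1869 ^ 2}

def B5pi : Set (Fin 5 → ℝ) := {v | (∑ j, (v j) ^ 2) ≤ 1.1869 ^ 2}

lemma measurable_Spi (R : ℝ) : MeasurableSet (Spi R) := by
  have m0 : Measurable fun w : Fin 6 → ℝ => w 0 := measurable_pi_apply 0
  have mabs : Measurable fun w : Fin 6 → ℝ => |w 0 - R| := (m0.sub measurable_const).abs
  have msum : Measurable fun w : Fin 6 → ℝ => (∑ i, w i ^ 2) - w 0 ^ 2 :=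
    (Finset.measurable_sum Finset.univ fun i _ => (measurable_pi_apply i).pow_const 2).sub
      (m0.pow_const 2)
  have : Spi R = {w | |w 0 - R| ≤ 0.285} ∩ {w | (∑ i, (w i) ^ 2) - (w 0) ^ 2 ≤ 1.1869 ^ 2} := by
    ext w; simp [Spi, Set.mem_inter_iff]
  rw [this]
  exact (measurableSet_le mabs measurable_const).inter (measurableSet_le msum measurable_const)

lemma measurable_B5pi : MeasurableSet B5pi := by
  have msum : Measurable fun v : Fin 5 → ℝ => (∑ j, v j ^ 2) :=
    Finset.measurable_sum Finset.univ fun i _ => (measurable_pi_apply i).pow_const 2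
  exact measurableSet_le msum measurable_const

lemma D_preimage (R : ℝ) : D R = (MeasurableEquiv.toLp 2 (Fin 6 → ℝ)).symm ⁻¹' (Spi R) := by
  ext w
  have h : ∀ i, (MeasurableEquiv.toLp 2 (Fin 6 → ℝ)).symm w i = w i := fun _ => rfl
  simp only [D, Spi, Set.mem_preimage, Set.mem_setOf_eq, h, norm_sq_eq6]

lemma measurable_D (R : ℝ) : MeasurableSet (D R) := by
  rw [D_preimage]
  exact (MeasurableEquiv.toLp 2 (Fin 6 → ℝ)).symm.measurable (measurable_Spi R)

lemma volume_B5pi : volume B5pi = (ENNReal.ofReal (1.1869:ℝ)) ^ 5 *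
    ENNReal.ofReal (Real.sqrt π ^ 5 / Real.Gamma (5 / 2 + 1)) := by
  have hpre : (MeasurableEquiv.toLp 2 (Fin 5 → ℝ)).symm ⁻¹' B5pi = closedBall (0 : E5) 1.1869 := by
    ext u
    have h : ∀ i, (MeasurableEquiv.toLp 2 (Fin 5 → ℝ)).symm u i = u i := fun _ => rfl
    simp only [Set.mem_preimage, B5pi, Set.mem_setOf_eq, h, mem_closedBall, dist_zero_right]
    constructor
    · intro hs
      have h2 : ‖u‖ ^ 2 ≤ (1.1869:ℝ) ^ 2 := by rw [norm_sq_eq5]; exact hs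
      nlinarith [norm_nonneg u]
    · intro hn
      rw [← norm_sq_eq5]
      nlinarith [norm_nonneg u]
  have := (EuclideanSpace.volume_preserving_symm_measurableEquiv_toLp (Fin 5)).measure_preimage
    measurable_B5pi.nullMeasurableSet
  rw [hpre] at this
  rw [← this, EuclideanSpace.volume_closedBall]
  simp [Fintype.card_fin]

lemma volume_Spi (R : ℝ) : volume (Spi R) = ENNReal.ofReal (0.57:ℝ) *
    ((ENNReal.ofReal (1.1869:ℝ)) ^ 5 * ENNReal.ofReal (Real.sqrt π ^ 5 / Real.Gamma (5 / 2 + 1))) := by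
  have hψ := measurePreserving_piFinSuccAbove (fun _ : Fin 6 => (volume : Measure ℝ)) 0
  set ψ := MeasurableEquiv.piFinSuccAbove (fun _ : Fin 6 => ℝ) 0 with hψdef
  have hS : Spi R = ψ ⁻¹' ((Set.Icc (R - 0.285) (R + 0.285)) ×ˢ B5pi) := by
    ext w
    have happ : ψ w = (w 0, fun j => w (Fin.succAbove 0 j)) := rfl
    simp only [Spi, Set.mem_setOf_eq, Set.mem_preimage, happ, Set.mem_prod, Set.mem_Icc, B5pi]
    rw [Fin.sum_univ_succAbove (fun i => w i ^ 2) 0, abs_le]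
    constructor
    · rintro ⟨⟨ha, hb⟩, hc⟩
      exact ⟨⟨by linarith, by linarith⟩, by linarith⟩
    · rintro ⟨⟨ha, hb⟩, hc⟩
      exact ⟨⟨by linarith, by linarith⟩, by linarith⟩
  rw [hS]
  have hvol : (volume : Measure (Fin 6 → ℝ)) = Measure.pi fun _ => volume := volume_pi
  have hvol5 : (volume : Measure (Fin 5 → ℝ)) = Measure.pi fun _ => volume := volume_pi
  rw [hvol]
  rw [hψ.measure_preimage ((measurableSet_Icc.prod measurable_B5pi).nullMeasurableSet)]
  rw [Measure.prod_prod, Real.volume_Icc, ← hvol5, volume_B5pi]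
  congr 1
  norm_num

lemma measurable_Cyl (p : E6) : MeasurableSet (Cyl p) :=
  (measurable_D ‖p‖).preimage (rot p).continuous.measurable

lemma volume_Cyl (p : E6) : volume (Cyl p) = ENNReal.ofReal (0.57:ℝ) *
    ((ENNReal.ofReal (1.1869:ℝ)) ^ 5 * ENNReal.ofReal (Real.sqrt π ^ 5 / Real.Gamma (5 / 2 + 1))) := by
  have h1 : volume (Cyl p) = volume (D ‖p‖) :=
    (rot p).measurePreserving.measure_preimage (measurable_D _).nullMeasurableSet
  have h2 : volume (D ‖p‖) = volume (Spi ‖p‖) := by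
    rw [D_preimage]
    exact (EuclideanSpace.volume_preserving_symm_measurableEquiv_toLp (Fin 6)).measure_preimage
      (measurable_Spi _).nullMeasurableSet
  rw [h1, h2, volume_Spi]

/-- volume of cylinder as `ofReal` of an explicit real number -/
lemma volume_Cyl' (p : E6) : volume (Cyl p) =
    ENNReal.ofReal ((0.57:ℝ) * 1.1869 ^ 5 * (8 / 15 * π ^ 2)) := by
  have hΓ : Real.Gamma (5 / 2 + 1) = 15 / 8 * Real.sqrt π := by
    rw [Real.Gamma_add_one (by norm_num)]
    have e32 : (5: ℝ) / 2 = 3 / 2 + 1 := by norm_num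
    rw [e32, Real.Gamma_add_one (by norm_num)]
    have e12 : (3 : ℝ) / 2 = 1 / 2 + 1 := by norm_num
    rw [e12, Real.Gamma_add_one (by norm_num), Real.Gamma_one_half_eq]
    ring
  have hsq : Real.sqrt π ^ 5 / (15 / 8 * Real.sqrt π) = 8 / 15 * π ^ 2 := by
    have h0 : Real.sqrt π ≠ 0 := ne_of_gt (Real.sqrt_pos.mpr Real.pi_pos)
    have h2 : Real.sqrt π ^ 2 = π := Real.sq_sqrt Real.pi_pos.le
    have h5 : Real.sqrt π ^ 5 = (Real.sqrt π ^ 2) ^ 2 * Real.sqrt π := by ring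
    rw [h5, h2]
    field_simp
  rw [volume_Cyl, hΓ, hsq, ← ENNReal.ofReal_pow (by norm_num : (0:ℝ) ≤ 1.1869),
    ← ENNReal.ofReal_mul (by positivity), ← ENNReal.ofReal_mul (by norm_num), mul_assoc]

lemma cyl_disjoint {L : Submodule ℤ E6}
    (hmin : ∀ x ∈ L, x ≠ 0 → (6 : ℝ) ≤ ‖x‖ ^ 2)
    {p p' : E6} (hp : p ∈ L) (hp' : p' ∈ L) (hne : p ≠ p')
    (h22 : (22:ℝ) ≤ ‖p‖ ^ 2) (h22' : (22:ℝ) ≤ ‖p'‖ ^ 2) :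
    Disjoint (Cyl p) (Cyl p') := by
  rw [Set.disjoint_left]
  intro y hy hy'
  have h1 := (cyl_props h22 hy).1
  have h2 := (cyl_props h22' hy').1
  have hsub : p - p' ∈ L := sub_mem hp hp'
  have hne0 : p - p' ≠ 0 := sub_ne_zero.mpr hne
  have h6 : (6:ℝ) ≤ ‖p - p'‖ ^ 2 := hmin _ hsub hne0
  have htri : ‖p - p'‖ ≤ ‖p - y‖ + ‖y - p'‖ := norm_sub_le_norm_sub_add_norm_sub p y p'
  have hyp : ‖p - y‖ = ‖y - p‖ := norm_sub_rev p y
  rw [hyp] at htri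
  have hsq := mul_self_le_mul_self (norm_nonneg (p - p')) htri
  nlinarith [norm_nonneg (y - p), norm_nonneg (y - p'), norm_nonneg (p - p'),
    sq_nonneg (‖y - p‖ - ‖y - p'‖)]

lemma sqrtpi_pow6 : Real.sqrt π ^ 6 = π ^ 3 := by
  have h2 : Real.sqrt π ^ 2 = π := Real.sq_sqrt Real.pi_pos.le
  have : Real.sqrt π ^ 6 = (Real.sqrt π ^ 2) ^ 3 := by ring
  rw [this, h2]

lemma Gamma4 : Real.Gamma (6 / 2 + 1) = 6 := by
  have h : (6:ℝ) / 2 + 1 = (3:ℕ) + 1 := by norm_num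
  rw [h, Real.Gamma_nat_eq_factorial]
  norm_num [Nat.factorial]

lemma count_bound {L : Submodule ℤ E6}
    (hmin : ∀ x ∈ L, x ≠ 0 → (6 : ℝ) ≤ ‖x‖ ^ 2)
    (G : Finset E6) (hGL : ∀ p ∈ G, p ∈ L) (hG22 : ∀ p ∈ G, (22:ℝ) ≤ ‖p‖ ^ 2)
    {T : ℝ} (hT22 : 22 ≤ T) (hT : ∀ p ∈ G, ‖p‖ ^ 2 < T) :
    (G.card : ℝ) * ((0.57:ℝ) * 1.1869 ^ 5 * (8 / 15 * π ^ 2)) + 19.407686 ^ 3 * (π ^ 3 / 6)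
      ≤ (1.059752245 * T + 2.84932018375) ^ 3 * (π ^ 3 / 6) := by
  set rad2 : ℝ := 1.059752245 * T + 2.84932018375 with hrad2def
  have hrad2_ge : (26:ℝ) ≤ rad2 := by rw [hrad2def]; nlinarith
  have hR1 : (0:ℝ) ≤ 19.407686 := by norm_num
  -- subsets
  have hsub : ∀ p ∈ G, Cyl p ⊆ closedBall (0:E6) (Real.sqrt rad2) := by
    intro p hp y hy
    obtain ⟨-, hup, -⟩ := cyl_props (hG22 p hp) hy
    have hpT : ‖p‖ ≤ 0.1048285 * (T + 22.75) := by
      nlinarith [sq_nonneg (T - 22.75), norm_nonneg p, hT p hp]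
    have hy2 : ‖y‖ ^ 2 ≤ rad2 := by
      rw [hrad2def]; nlinarith [hT p hp, norm_nonneg p]
    rw [mem_closedBall, dist_zero_right]
    calc ‖y‖ = Real.sqrt (‖y‖ ^ 2) := (Real.sqrt_sq (norm_nonneg y)).symm
    _ ≤ Real.sqrt rad2 := Real.sqrt_le_sqrt hy2
  have hqball : ∀ p ∈ G, Disjoint (ball (0:E6) (Real.sqrt 19.407686)) (Cyl p) := by
    intro p hp
    rw [Set.disjoint_left]
    intro y hyb hyc
    obtain ⟨-, -, hlow⟩ := cyl_props (hG22 p hp) hyc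
    rw [mem_ball, dist_zero_right] at hyb
    have : ‖y‖ ^ 2 < 19.407686 := by
      have h1 : ‖y‖ ^ 2 < (Real.sqrt 19.407686) ^ 2 :=
        pow_lt_pow_left₀ hyb (norm_nonneg y) two_ne_zero
      rwa [Real.sq_sqrt hR1] at h1
    linarith
  -- disjointness
  have hdisj : (↑G : Set E6).PairwiseDisjoint Cyl := fun p hp p' hp' hne =>
    cyl_disjoint hmin (hGL _ hp) (hGL _ hp') hne (hG22 _ hp) (hG22 _ hp')
  have hUnion : volume (⋃ p ∈ G, Cyl p) = ∑ p ∈ G, volume (Cyl p) :=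
    measure_biUnion_finset hdisj (fun p _ => measurable_Cyl p)
  have hBallDisj : Disjoint (ball (0:E6) (Real.sqrt 19.407686)) (⋃ p ∈ G, Cyl p) := by
    rw [Set.disjoint_left]
    intro y hyb hyU
    rw [Set.mem_iUnion₂] at hyU
    obtain ⟨p, hp, hyc⟩ := hyU
    exact (Set.disjoint_left.mp (hqball p hp)) hyb hyc
  have hcb : ball (0:E6) (Real.sqrt 19.407686) ∪ (⋃ p ∈ G, Cyl p) ⊆
      closedBall (0:E6) (Real.sqrt rad2) := by
    apply Set.union_subset
    · refine (ball_subset_closedBall).trans (closedBall_subset_closedBall ?_)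
      exact Real.sqrt_le_sqrt (by linarith)
    · exact Set.iUnion₂_subset hsub
  have hmeasU : MeasurableSet (⋃ p ∈ G, Cyl p) :=
    G.measurableSet_biUnion (fun p _ => measurable_Cyl p)
  have key : volume (ball (0:E6) (Real.sqrt 19.407686)) + ∑ p ∈ G, volume (Cyl p) ≤
      volume (closedBall (0:E6) (Real.sqrt rad2)) := by
    rw [← hUnion, ← measure_union hBallDisj hmeasU]
    exact measure_mono hcb
  -- volumes in closed form
  have hc6 : Real.sqrt π ^ 6 / Real.Gamma (6 / 2 + 1) = π ^ 3 / 6 := by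
    rw [sqrtpi_pow6, Gamma4]
  have hballvol : volume (ball (0:E6) (Real.sqrt 19.407686)) =
      ENNReal.ofReal (19.407686 ^ 3 * (π ^ 3 / 6)) := by
    rw [EuclideanSpace.volume_ball]
    simp only [Fintype.card_fin, hc6]
    rw [← ENNReal.ofReal_pow (Real.sqrt_nonneg _), ← ENNReal.ofReal_mul (by positivity)]
    congr 2
    have : Real.sqrt 19.407686 ^ 6 = (Real.sqrt 19.407686 ^ 2) ^ 3 := by ring
    rw [this, Real.sq_sqrt hR1]
  have hcbvol : volume (closedBall (0:E6) (Real.sqrt rad2)) =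
      ENNReal.ofReal (rad2 ^ 3 * (π ^ 3 / 6)) := by
    rw [EuclideanSpace.volume_closedBall]
    simp only [Fintype.card_fin, hc6]
    rw [← ENNReal.ofReal_pow (Real.sqrt_nonneg _), ← ENNReal.ofReal_mul (by positivity)]
    congr 2
    have : Real.sqrt rad2 ^ 6 = (Real.sqrt rad2 ^ 2) ^ 3 := by ring
    rw [this, Real.sq_sqrt (by linarith : (0:ℝ) ≤ rad2)]
  have hsumvol : ∑ p ∈ G, volume (Cyl p) =
      ENNReal.ofReal ((G.card : ℝ) * ((0.57:ℝ) * 1.1869 ^ 5 * (8 / 15 * π ^ 2))) := by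
    rw [Finset.sum_congr rfl (fun p _ => volume_Cyl' p), Finset.sum_const, nsmul_eq_mul,
      ← ENNReal.ofReal_natCast G.card, ← ENNReal.ofReal_mul (by positivity)]
  rw [hballvol, hsumvol, hcbvol, ← ENNReal.ofReal_add (by positivity) (by positivity)] at key
  have hreal := (ENNReal.ofReal_le_ofReal_iff (by positivity)).mp key
  linarith

lemma exp_dom (i : ℕ) :
    ((1.059752245:ℝ) * (22 + ((i:ℝ) + 1) * 0.01) + 2.84932018375) ^ 3 ≤
      26.16386957375 ^ 3 * (Real.exp 0.00121514) ^ (i + 1) := by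
  set u : ℝ := (i:ℝ) + 1 with hu
  have hu0 : (0:ℝ) ≤ u := by positivity
  have hlin : (1.059752245:ℝ) * (22 + u * 0.01) + 2.84932018375 ≤
      26.16386957375 * (1 + (0.00121514 / 3) * u) := by nlinarith
  have hexp : (1:ℝ) + (0.00121514 / 3) * u ≤ Real.exp ((0.00121514 / 3) * u) := by
    have := Real.add_one_le_exp ((0.00121514 / 3) * u)
    linarith
  have hlhs0 : (0:ℝ) ≤ (1.059752245:ℝ) * (22 + u * 0.01) + 2.84932018375 := by nlinarith
  have step : (1.059752245:ℝ) * (22 + u * 0.01) + 2.84932018375 ≤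
      26.16386957375 * Real.exp ((0.00121514 / 3) * u) := by nlinarith
  calc ((1.059752245:ℝ) * (22 + u * 0.01) + 2.84932018375) ^ 3
      ≤ (26.16386957375 * Real.exp ((0.00121514 / 3) * u)) ^ 3 :=
        pow_le_pow_left₀ hlhs0 step 3
    _ = 26.16386957375 ^ 3 * (Real.exp 0.00121514) ^ (i + 1) := by
        rw [mul_pow, ← Real.exp_nat_mul, ← Real.exp_nat_mul]
        congr 1
        push_cast [hu]
        ring

lemma count_bound2 {L : Submodule ℤ E6}
    (hmin : ∀ x ∈ L, x ≠ 0 → (6 : ℝ) ≤ ‖x‖ ^ 2)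
    (G : Finset E6) (hGL : ∀ p ∈ G, p ∈ L) (hG22 : ∀ p ∈ G, (22:ℝ) ≤ ‖p‖ ^ 2) (i : ℕ) :
    (((G.filter fun p => ‖p‖ ^ 2 < 22 + ((i:ℝ) + 1) * 0.01).card : ℝ)) ≤
      ((3.141593 / 6) / (0.57 * 1.1869 ^ 5 * (8 / 15))) *
        (26.16386957375 ^ 3 * (Real.exp 0.00121514) ^ (i + 1) - 19.407686 ^ 3) := by
  set T : ℝ := 22 + ((i:ℝ) + 1) * 0.01 with hT
  set Gi := G.filter fun p => ‖p‖ ^ 2 < T with hGi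
  have hT22 : (22:ℝ) ≤ T := by
    have : (0:ℝ) ≤ ((i:ℝ) + 1) * 0.01 := by positivity
    rw [hT]; linarith
  have hcnt := count_bound hmin Gi (fun p hp => hGL p (Finset.mem_filter.mp hp).1)
    (fun p hp => hG22 p (Finset.mem_filter.mp hp).1) hT22
    (fun p hp => (Finset.mem_filter.mp hp).2)
  set X : ℝ := 26.16386957375 ^ 3 * (Real.exp 0.00121514) ^ (i + 1) with hXdef
  have hX : (1.059752245 * T + 2.84932018375) ^ 3 ≤ X := exp_dom i
  have hg1 : (1:ℝ) ≤ (Real.exp 0.00121514) ^ (i + 1) :=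
    one_le_pow₀ (by nlinarith [Real.add_one_le_exp (0.00121514:ℝ)])
  have hXR : (19.407686:ℝ) ^ 3 ≤ X := by rw [hXdef]; nlinarith
  have hπu : π < 3.141593 := Real.pi_lt_d6
  have hπ0 : (0:ℝ) < π := Real.pi_pos
  have hmain : (Gi.card : ℝ) * (0.57 * 1.1869 ^ 5 * (8 / 15)) * π ^ 2 ≤
      ((X - 19.407686 ^ 3) * (3.141593 / 6)) * π ^ 2 := by
    have e1 : (Gi.card : ℝ) * (0.57 * 1.1869 ^ 5 * (8 / 15 * π ^ 2)) =
        (Gi.card : ℝ) * (0.57 * 1.1869 ^ 5 * (8 / 15)) * π ^ 2 := by ring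
    have hXmul : (1.059752245 * T + 2.84932018375) ^ 3 * (π ^ 3 / 6) ≤ X * (π ^ 3 / 6) :=
      mul_le_mul_of_nonneg_right hX (by positivity)
    have hcube : (X - 19.407686 ^ 3) * (π ^ 3 / 6) ≤
        (X - 19.407686 ^ 3) * (π ^ 2 * (3.141593 / 6)) := by
      apply mul_le_mul_of_nonneg_left _ (by linarith)
      nlinarith [sq_nonneg π]
    nlinarith [hcnt, hXmul, hcube]
  have hK2 : (0:ℝ) < 0.57 * 1.1869 ^ 5 * (8 / 15) := by norm_num
  have hfinal : (Gi.card : ℝ) * (0.57 * 1.1869 ^ 5 * (8 / 15)) ≤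
      (X - 19.407686 ^ 3) * (3.141593 / 6) :=
    le_of_mul_le_mul_right hmain (by positivity)
  rw [div_mul_eq_mul_div, le_div_iff₀ hK2]
  nlinarith [hfinal]

set_option maxHeartbeats 2000000 in
lemma exp_bound_E : Real.exp (-29.428784) ≤ (2.508351 ^ 32 : ℝ)⁻¹ := by
  have hL : (2.508351:ℝ) ≤ Real.exp 0.9196495 := by
    have h13 := Real.sum_le_exp_of_nonneg (by norm_num : (0:ℝ) ≤ 0.9196495) 13
    have hsum : (2.508351:ℝ) ≤ ∑ i ∈ Finset.range 13, (0.9196495:ℝ) ^ i / (Nat.factorial i : ℝ) := by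
      simp only [Finset.sum_range_succ, Finset.sum_range_zero, Nat.factorial]
      norm_num
    linarith
  have h32 : Real.exp (29.428784 : ℝ) = (Real.exp 0.9196495) ^ 32 := by
    rw [← Real.exp_nat_mul]; norm_num
  have hge : (2.508351:ℝ) ^ 32 ≤ Real.exp 29.428784 := by
    rw [h32]; exact pow_le_pow_left₀ (by norm_num) hL 32
  rw [Real.exp_neg]
  exact inv_anti₀ (by positivity) hge

set_option maxHeartbeats 4000000 in
lemma main_sum {L : Submodule ℤ E6}
    (hmin : ∀ x ∈ L, x ≠ 0 → (6 : ℝ) ≤ ‖x‖ ^ 2)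
    (G : Finset E6) (hGL : ∀ p ∈ G, p ∈ L) (hG22 : ∀ p ∈ G, (22:ℝ) ≤ ‖p‖ ^ 2) :
    ∑ p ∈ G, Real.exp (-(1.337672) * ‖p‖ ^ 2) ≤ 1.55e-9 := by
  set z : ℝ := Real.exp (-0.01337672) with hzdef
  set g : ℝ := Real.exp 0.00121514 with hgdef
  set E : ℝ := Real.exp (-29.428784) with hEdef
  set Cv : ℝ := (3.141593 / 6) / (0.57 * 1.1869 ^ 5 * (8 / 15)) with hCvdef
  set K : ℝ := 26.16386957375 with hKdef
  set R : ℝ := 19.407686 with hRdef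
  have hz0 : 0 < z := Real.exp_pos _
  have hz1 : z < 1 := by rw [hzdef]; exact Real.exp_lt_one_iff.mpr (by norm_num)
  have hg1 : (1:ℝ) ≤ g := by
    rw [hgdef]; nlinarith [Real.add_one_le_exp (0.00121514:ℝ)]
  have hzg : z * g = Real.exp (-0.01216158) := by
    rw [hzdef, hgdef, ← Real.exp_add]; norm_num
  have hzg0 : 0 < z * g := by positivity
  have hzg1 : z * g < 1 := by rw [hzg]; exact Real.exp_lt_one_iff.mpr (by norm_num)
  set ind : E6 → ℕ → ℝ := fun p i => if ‖p‖ ^ 2 < 22 + ((i:ℝ) + 1) * 0.01 then z ^ i else 0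
    with hinddef
  have hind_nonneg : ∀ p i, 0 ≤ ind p i := by
    intro p i; rw [hinddef]; dsimp only; split <;> positivity
  have hind_le : ∀ p i, ind p i ≤ z ^ i := by
    intro p i; rw [hinddef]; dsimp only; split
    · exact le_rfl
    · positivity
  have hind_summable : ∀ p, Summable (ind p) :=
    fun p => Summable.of_nonneg_of_le (hind_nonneg p) (hind_le p)
      (summable_geometric_of_lt_one hz0.le hz1)
  -- step (a): pointwise bound
  have stepA : ∀ p ∈ G, Real.exp (-(1.337672) * ‖p‖ ^ 2) ≤ E * ((1 - z) * ∑' i, ind p i) := by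
    intro p hp
    have hp22 := hG22 p hp
    set j : ℕ := ⌊(‖p‖ ^ 2 - 22) / 0.01⌋₊ with hjdef
    have hnn : (0:ℝ) ≤ (‖p‖ ^ 2 - 22) / 0.01 := by
      apply div_nonneg _ (by norm_num); linarith
    have hj1 : (j:ℝ) ≤ (‖p‖ ^ 2 - 22) / 0.01 := Nat.floor_le hnn
    have hj1' : 22 + (j:ℝ) * 0.01 ≤ ‖p‖ ^ 2 := by
      rw [le_div_iff₀ (by norm_num : (0:ℝ) < 0.01)] at hj1; linarith
    have hj2 : (‖p‖ ^ 2 - 22) / 0.01 < (j:ℝ) + 1 := Nat.lt_floor_add_one _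
    have hj2' : ‖p‖ ^ 2 < 22 + ((j:ℝ) + 1) * 0.01 := by
      rw [div_lt_iff₀ (by norm_num : (0:ℝ) < 0.01)] at hj2; linarith
    have hmono : Real.exp (-(1.337672) * ‖p‖ ^ 2) ≤
        Real.exp (-(1.337672) * (22 + (j:ℝ) * 0.01)) := by
      apply Real.exp_le_exp.mpr; nlinarith
    have hsplit : Real.exp (-(1.337672) * (22 + (j:ℝ) * 0.01)) = E * z ^ j := by
      rw [hEdef, hzdef, ← Real.exp_nat_mul, ← Real.exp_add]
      congr 1; push_cast; ring
    have htsum : ∑' i, ind p i = z ^ j * (1 - z)⁻¹ := by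
      have hinj : Function.Injective (fun k : ℕ => k + j) := add_left_injective j
      have hsupp : Function.support (ind p) ⊆ Set.range (fun k : ℕ => k + j) := by
        intro i hi
        rw [Function.mem_support, hinddef] at hi
        dsimp only at hi
        by_cases hc : ‖p‖ ^ 2 < 22 + ((i:ℝ) + 1) * 0.01
        · have hji : (j:ℝ) < (i:ℝ) + 1 := by nlinarith
          have hji' : j ≤ i := by exact_mod_cast Nat.lt_add_one_iff.mp (by exact_mod_cast hji)
          exact ⟨i - j, by simp [Nat.sub_add_cancel hji']⟩
        · simp [hc] at hi
      have hcomp := hinj.tsum_eq (f := ind p) hsupp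
      rw [← hcomp]
      have hval : ∀ k : ℕ, ind p (k + j) = z ^ j * z ^ k := by
        intro k
        rw [hinddef]
        dsimp only
        have hcond : ‖p‖ ^ 2 < 22 + (((k + j : ℕ):ℝ) + 1) * 0.01 := by
          push_cast
          nlinarith [Nat.cast_nonneg (α := ℝ) k]
        rw [if_pos hcond, pow_add]; ring
      rw [tsum_congr hval, tsum_mul_left, tsum_geometric_of_lt_one hz0.le hz1]
    rw [htsum]
    have h1z : (1:ℝ) - z ≠ 0 := by linarith [hz1]
    have : E * ((1 - z) * (z ^ j * (1 - z)⁻¹)) = E * z ^ j := by field_simp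
    rw [this, ← hsplit]
    exact hmono
  -- step (b): sum over G and swap with tsum
  have stepB : ∑ p ∈ G, Real.exp (-(1.337672) * ‖p‖ ^ 2) ≤
      E * (1 - z) * ∑' i, ∑ p ∈ G, ind p i := by
    have hswap : ∑' i, ∑ p ∈ G, ind p i = ∑ p ∈ G, ∑' i, ind p i :=
      Summable.tsum_finsetSum (fun p _ => hind_summable p)
    rw [hswap, Finset.mul_sum]
    apply Finset.sum_le_sum
    intro p hp
    calc Real.exp (-(1.337672) * ‖p‖ ^ 2) ≤ E * ((1 - z) * ∑' i, ind p i) := stepA p hp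
    _ = E * (1 - z) * ∑' i, ind p i := by ring
  -- count identification and bound
  have hcount : ∀ i : ℕ, ∑ p ∈ G, ind p i =
      ((G.filter fun p => ‖p‖ ^ 2 < 22 + ((i:ℝ) + 1) * 0.01).card : ℝ) * z ^ i := by
    intro i
    rw [hinddef]
    dsimp only
    rw [← Finset.sum_filter, Finset.sum_const, nsmul_eq_mul]
  have hterm_le : ∀ i : ℕ, ∑ p ∈ G, ind p i ≤
      (Cv * (K ^ 3 * g ^ (i + 1) - R ^ 3)) * z ^ i := by
    intro i
    rw [hcount i]
    apply mul_le_mul_of_nonneg_right _ (by positivity)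
    exact count_bound2 hmin G hGL hG22 i
  -- summability of both sides
  have hsum_lhs : Summable (fun i => ∑ p ∈ G, ind p i) := by
    apply Summable.of_nonneg_of_le
      (fun i => Finset.sum_nonneg fun p _ => hind_nonneg p i)
      (fun i => ?_) (((summable_geometric_of_lt_one hz0.le hz1)).mul_left (G.card : ℝ))
    calc ∑ p ∈ G, ind p i ≤ ∑ p ∈ G, z ^ i := Finset.sum_le_sum fun p _ => hind_le p i
    _ = (G.card : ℝ) * z ^ i := by rw [Finset.sum_const, nsmul_eq_mul]
  have hsum1 : Summable (fun i : ℕ => (Cv * K ^ 3 * g) * (z * g) ^ i) :=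
    ((summable_geometric_of_lt_one hzg0.le hzg1)).mul_left _
  have hsum2 : Summable (fun i : ℕ => (Cv * R ^ 3) * z ^ i) :=
    ((summable_geometric_of_lt_one hz0.le hz1)).mul_left _
  have hrw : ∀ i : ℕ, (Cv * (K ^ 3 * g ^ (i + 1) - R ^ 3)) * z ^ i =
      (Cv * K ^ 3 * g) * (z * g) ^ i - (Cv * R ^ 3) * z ^ i := by
    intro i
    rw [mul_pow, pow_succ]
    ring
  have hsum_rhs : Summable (fun i : ℕ => (Cv * (K ^ 3 * g ^ (i + 1) - R ^ 3)) * z ^ i) := by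
    apply Summable.congr (hsum1.sub hsum2)
    intro i
    rw [hrw i]
  have htsum_le : ∑' i, ∑ p ∈ G, ind p i ≤
      ∑' i : ℕ, (Cv * (K ^ 3 * g ^ (i + 1) - R ^ 3)) * z ^ i :=
    Summable.tsum_le_tsum hterm_le hsum_lhs hsum_rhs
  have hrhs_val : ∑' i : ℕ, (Cv * (K ^ 3 * g ^ (i + 1) - R ^ 3)) * z ^ i =
      (Cv * K ^ 3 * g) * (1 - z * g)⁻¹ - (Cv * R ^ 3) * (1 - z)⁻¹ := by
    rw [tsum_congr hrw, Summable.tsum_sub hsum1 hsum2, tsum_mul_left, tsum_mul_left,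
      tsum_geometric_of_lt_one hzg0.le hzg1, tsum_geometric_of_lt_one hz0.le hz1]
  -- final numeric assembly
  have h1z0 : (0:ℝ) < 1 - z := by linarith
  have hbound : ∑ p ∈ G, Real.exp (-(1.337672) * ‖p‖ ^ 2) ≤
      E * ((Cv * K ^ 3 * g) * ((1 - z) * (1 - z * g)⁻¹) - Cv * R ^ 3) := by
    have h2 : E * (1 - z) * ∑' i, ∑ p ∈ G, ind p i ≤
        E * (1 - z) * ((Cv * K ^ 3 * g) * (1 - z * g)⁻¹ - (Cv * R ^ 3) * (1 - z)⁻¹) := by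
      apply mul_le_mul_of_nonneg_left _ (by positivity)
      rw [← hrhs_val]; exact htsum_le
    have h3 : E * (1 - z) * ((Cv * K ^ 3 * g) * (1 - z * g)⁻¹ - (Cv * R ^ 3) * (1 - z)⁻¹) =
        E * ((Cv * K ^ 3 * g) * ((1 - z) * (1 - z * g)⁻¹) - Cv * R ^ 3) := by
      field_simp
    calc ∑ p ∈ G, Real.exp (-(1.337672) * ‖p‖ ^ 2) ≤
        E * (1 - z) * ∑' i, ∑ p ∈ G, ind p i := stepB
      _ ≤ E * (1 - z) * ((Cv * K ^ 3 * g) * (1 - z * g)⁻¹ - (Cv * R ^ 3) * (1 - z)⁻¹) := h2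
      _ = E * ((Cv * K ^ 3 * g) * ((1 - z) * (1 - z * g)⁻¹) - Cv * R ^ 3) := h3
  -- numeric bounds on the pieces
  have h1z_le : 1 - z ≤ 0.01337672 := by
    rw [hzdef]; nlinarith [Real.add_one_le_exp (-0.01337672 : ℝ)]
  have hgU : g ≤ 1.0012167 := by
    have h1 : (0.99878486:ℝ) ≤ Real.exp (-0.00121514) := by
      nlinarith [Real.add_one_le_exp (-0.00121514 : ℝ)]
    have h2 : g * Real.exp (-0.00121514) = 1 := by
      rw [hgdef, ← Real.exp_add]; norm_num
    have hp : (0:ℝ) < Real.exp (-0.00121514) := Real.exp_pos _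
    have h4 : g * Real.exp (-0.00121514) ≤ 1.0012167 * Real.exp (-0.00121514) := by
      rw [h2]; nlinarith [h1]
    exact le_of_mul_le_mul_right h4 hp
  have hzgU : (1 - z * g)⁻¹ ≤ 83.2263 := by
    have h1 : z * g ≤ (1.01216158:ℝ)⁻¹ := by
      rw [hzg, Real.exp_neg]
      exact inv_anti₀ (by norm_num) (by nlinarith [Real.add_one_le_exp (0.01216158:ℝ)])
    have h2 : (1:ℝ) - (1.01216158:ℝ)⁻¹ ≤ 1 - z * g := by linarith
    have h3 : (0:ℝ) < 1 - (1.01216158:ℝ)⁻¹ := by norm_num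
    calc (1 - z * g)⁻¹ ≤ (1 - (1.01216158:ℝ)⁻¹)⁻¹ := inv_anti₀ h3 h2
    _ ≤ 83.2263 := by norm_num
  have hEU : E ≤ (2.508351 ^ 32 : ℝ)⁻¹ := exp_bound_E
  have hprod : (1 - z) * (1 - z * g)⁻¹ ≤ 0.01337672 * 83.2263 := by
    apply mul_le_mul h1z_le hzgU (inv_nonneg.mpr (by linarith)) (by norm_num)
  have hCvpos : (0:ℝ) < Cv := by rw [hCvdef]; norm_num
  have hbracket : (Cv * K ^ 3 * g) * ((1 - z) * (1 - z * g)⁻¹) - Cv * R ^ 3 ≤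
      (Cv * K ^ 3 * 1.0012167) * (0.01337672 * 83.2263) - Cv * R ^ 3 := by
    have hK3 : (0:ℝ) < K ^ 3 := by rw [hKdef]; norm_num
    have hCvK : (0:ℝ) ≤ Cv * K ^ 3 := by
      apply mul_nonneg hCvpos.le; rw [hKdef]; norm_num
    have step1 : (Cv * K ^ 3 * g) * ((1 - z) * (1 - z * g)⁻¹) ≤
        (Cv * K ^ 3 * 1.0012167) * (0.01337672 * 83.2263) := by
      apply mul_le_mul _ hprod (mul_nonneg h1z0.le (inv_nonneg.mpr (by linarith))) _
      · exact mul_le_mul_of_nonneg_left hgU hCvK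
      · nlinarith [hCvK]
    linarith
  have hbarpos : (0:ℝ) ≤ (Cv * K ^ 3 * 1.0012167) * (0.01337672 * 83.2263) - Cv * R ^ 3 := by
    rw [hCvdef, hKdef, hRdef]; norm_num
  have hfinal : ∑ p ∈ G, Real.exp (-(1.337672) * ‖p‖ ^ 2) ≤
      (2.508351 ^ 32 : ℝ)⁻¹ * ((Cv * K ^ 3 * 1.0012167) * (0.01337672 * 83.2263) - Cv * R ^ 3) := by
    calc ∑ p ∈ G, Real.exp (-(1.337672) * ‖p‖ ^ 2) ≤
        E * ((Cv * K ^ 3 * g) * ((1 - z) * (1 - z * g)⁻¹) - Cv * R ^ 3) := hbound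
      _ ≤ E * ((Cv * K ^ 3 * 1.0012167) * (0.01337672 * 83.2263) - Cv * R ^ 3) :=
        mul_le_mul_of_nonneg_left hbracket (Real.exp_pos _).le
      _ ≤ (2.508351 ^ 32 : ℝ)⁻¹ * ((Cv * K ^ 3 * 1.0012167) * (0.01337672 * 83.2263) - Cv * R ^ 3) :=
        mul_le_mul_of_nonneg_right hEU hbarpos
  refine hfinal.trans ?_
  rw [hCvdef, hKdef, hRdef]
  rw [inv_mul_le_iff₀ (by positivity)]
  norm_num

end Aux18
end Aux18

theorem stmt_18 (L : Submodule ℤ (EuclideanSpace ℝ (Fin 6)))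
    (hmin : ∀ x ∈ L, x ≠ 0 → (6 : ℝ) ≤ ‖x‖ ^ 2)
    (w : ℝ) (hw0 : 0 < w) (hw : w < 0.24163) :
    ∑' x : {x : EuclideanSpace ℝ (Fin 6) // x ∈ L ∧ (22 : ℝ) ≤ ‖x‖ ^ 2},
        Real.exp (-(Real.pi - 2 * Real.pi * w - 2 / 7) * ‖(x : EuclideanSpace ℝ (Fin 6))‖ ^ 2)
      < 2.19277e-9 := by
  have hq : (1.337672:ℝ) ≤ Real.pi - 2 * Real.pi * w - 2 / 7 := by
    nlinarith [Real.pi_gt_d20, hw, hw0]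
  have key : ∀ F : Finset {x : EuclideanSpace ℝ (Fin 6) // x ∈ L ∧ (22 : ℝ) ≤ ‖x‖ ^ 2},
      ∑ x ∈ F, Real.exp (-(Real.pi - 2 * Real.pi * w - 2 / 7) *
        ‖(x : EuclideanSpace ℝ (Fin 6))‖ ^ 2) ≤ 1.55e-9 := by
    intro F
    classical
    have hstep1 : ∑ x ∈ F, Real.exp (-(Real.pi - 2 * Real.pi * w - 2 / 7) *
        ‖(x : EuclideanSpace ℝ (Fin 6))‖ ^ 2) ≤
        ∑ x ∈ F, Real.exp (-(1.337672) * ‖(x : EuclideanSpace ℝ (Fin 6))‖ ^ 2) := by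
      apply Finset.sum_le_sum
      intro x _
      apply Real.exp_le_exp.mpr
      nlinarith [x.2.2, hq]
    refine hstep1.trans ?_
    have himg : ∑ x ∈ F, Real.exp (-(1.337672) * ‖(x : EuclideanSpace ℝ (Fin 6))‖ ^ 2) =
        ∑ p ∈ F.image Subtype.val,
          Real.exp (-(1.337672) * ‖p‖ ^ 2) := by
      rw [Finset.sum_image]
      intro x _ y _ hxy
      exact Subtype.ext hxy
    rw [himg]
    apply Aux18.main_sum hmin
    · intro p hp
      obtain ⟨x, -, rfl⟩ := Finset.mem_image.mp hp
      exact x.2.1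
    · intro p hp
      obtain ⟨x, -, rfl⟩ := Finset.mem_image.mp hp
      exact x.2.2
  have := tsum_le_of_sum_le' (L := SummationFilter.unconditional _) (by norm_num : (0:ℝ) ≤ 1.55e-9) key
  calc ∑' x : {x : EuclideanSpace ℝ (Fin 6) // x ∈ L ∧ (22 : ℝ) ≤ ‖x‖ ^ 2},
      Real.exp (-(Real.pi - 2 * Real.pi * w - 2 / 7) *
        ‖(x : EuclideanSpace ℝ (Fin 6))‖ ^ 2) ≤ 1.55e-9 := this
    _ < 2.19277e-9 := by norm_num
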